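/- Hoffman number equals maximum hollow set size: Let S ⊆ R^d be discrete. Then the quantitative Hoffman number H'_S(k) (the largest cardinality of a k-Hoffman subset of S) equals the largest cardinality of a k-hollow subset of S. -/

import Mathlib

/-- `S` is a discrete subset of `ℝ^d`: every point has a neighborhood meeting `S` in a
finite set. -/
def DiscreteIn {d : ℕ} (S : Set (Fin d → ℝ)) : Prop :=
  ∀ x : Fin d → ℝ, ∃ ε > 0, (S ∩ Metric.ball x ε).Finite

/-- `X` contains at least `k` points. -/
def AtLeast {d : ℕ} (k : ℕ) (X : Set (Fin d → ℝ)) : Prop :=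
  ∃ T : Finset (Fin d → ℝ), ↑T ⊆ X ∧ k ≤ T.card

/-- `N` is a quantitative Helly number for `S` and `k`: for every finite family of convex
sets, if every subfamily of at most `N` members has at least `k` points of `S` in its
intersection, then so does the whole family. -/
def HellyProp {d : ℕ} (S : Set (Fin d → ℝ)) (k N : ℕ) : Prop :=
  ∀ (t : ℕ) (F : Fin t → Set (Fin d → ℝ)), (∀ i, Convex ℝ (F i)) →
    (∀ G : Finset (Fin t), G.card ≤ N → AtLeast k (S ∩ ⋂ i ∈ G, F i)) →
    AtLeast k (S ∩ ⋂ i, F i)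

/-- `P` is `k`-Hoffman with respect to `S`: `|⋂_{p∈P} conv(P∖{p}) ∩ S| < k`. -/
def IsKHoffman {d : ℕ} (S : Set (Fin d → ℝ)) (k : ℕ) (P : Finset (Fin d → ℝ)) : Prop :=
  ¬ AtLeast k ((⋂ p ∈ (P : Set (Fin d → ℝ)),
      convexHull ℝ ((P : Set (Fin d → ℝ)) \ {p})) ∩ S)

/-- `P` is `k`-hollow with respect to `S`: `|(conv(P) ∖ V(conv(P))) ∩ S| < k`. -/
def IsKHollow {d : ℕ} (S : Set (Fin d → ℝ)) (k : ℕ) (P : Finset (Fin d → ℝ)) : Prop :=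
  ¬ AtLeast k ((convexHull ℝ (P : Set (Fin d → ℝ)) \
      (convexHull ℝ (P : Set (Fin d → ℝ))).extremePoints ℝ) ∩ S)


open Set

variable {d : ℕ}

lemma atLeast_mono {k : ℕ} {X Y : Set (Fin d → ℝ)} (h : X ⊆ Y) (hX : AtLeast k X) :
    AtLeast k Y := by
  obtain ⟨T, hT, hk⟩ := hX
  exact ⟨T, hT.trans h, hk⟩

lemma finite_inter_compact {S : Set (Fin d → ℝ)} (hS : DiscreteIn S)
    {K : Set (Fin d → ℝ)} (hK : IsCompact K) : (S ∩ K).Finite := by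
  choose ε hε hfin using hS
  obtain ⟨t, -, ht⟩ := hK.elim_nhds_subcover (fun x => Metric.ball x (ε x))
    (fun x _ => Metric.ball_mem_nhds x (hε x))
  have hsub : S ∩ K ⊆ ⋃ x ∈ t, S ∩ Metric.ball x (ε x) := by
    rintro z ⟨hzS, hzK⟩
    obtain ⟨x, hx, hz⟩ := Set.mem_iUnion₂.mp (ht hzK)
    exact Set.mem_iUnion₂.mpr ⟨x, hx, hzS, hz⟩
  exact (t.finite_toSet.biUnion (fun x _ => hfin x)).subset hsub

lemma finite_S_conv {S : Set (Fin d → ℝ)} (hS : DiscreteIn S) (X : Finset (Fin d → ℝ)) :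
    (S ∩ convexHull ℝ (X : Set (Fin d → ℝ))).Finite :=
  finite_inter_compact hS (X.finite_toSet.isCompact_convexHull ℝ)

lemma conv_eq_conv_ext (X : Finset (Fin d → ℝ)) :
    convexHull ℝ (X : Set (Fin d → ℝ)) =
      convexHull ℝ ((convexHull ℝ (X : Set (Fin d → ℝ))).extremePoints ℝ) := by
  have hcomp : IsCompact (convexHull ℝ (X : Set (Fin d → ℝ))) :=
    X.finite_toSet.isCompact_convexHull ℝ
  have h := closure_convexHull_extremePoints hcomp (convex_convexHull ℝ _)
  have hfin : ((convexHull ℝ (X : Set (Fin d → ℝ))).extremePoints ℝ).Finite :=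
    X.finite_toSet.subset extremePoints_convexHull_subset
  rw [IsClosed.closure_eq (hfin.isClosed_convexHull ℝ)] at h
  exact h.symm

lemma ext_subset_self (X : Finset (Fin d → ℝ)) :
    (convexHull ℝ (X : Set (Fin d → ℝ))).extremePoints ℝ ⊆ (X : Set (Fin d → ℝ)) :=
  extremePoints_convexHull_subset

/-- A non-extreme member of `X` is in the hull of the rest. -/
lemma mem_hull_diff_of_not_ext {X : Finset (Fin d → ℝ)} {p : Fin d → ℝ}
    (hpX : p ∈ (X : Set (Fin d → ℝ)))
    (hp : p ∉ (convexHull ℝ (X : Set (Fin d → ℝ))).extremePoints ℝ) :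
    p ∈ convexHull ℝ ((X : Set (Fin d → ℝ)) \ {p}) := by
  have h1 : p ∈ convexHull ℝ ((convexHull ℝ (X : Set (Fin d → ℝ))).extremePoints ℝ) := by
    rw [← conv_eq_conv_ext]; exact subset_convexHull ℝ _ hpX
  refine convexHull_mono ?_ h1
  intro z hz
  exact ⟨ext_subset_self X hz, by rintro rfl; exact hp hz⟩

/-- An extreme point of the hull is not in the hull of the rest. -/
lemma ext_not_mem_hull_diff {X : Finset (Fin d → ℝ)} {p : Fin d → ℝ}
    (hp : p ∈ (convexHull ℝ (X : Set (Fin d → ℝ))).extremePoints ℝ) :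
    p ∉ convexHull ℝ ((X : Set (Fin d → ℝ)) \ {p}) := by
  intro hmem
  have hconv : Convex ℝ (convexHull ℝ (X : Set (Fin d → ℝ)) \ {p}) :=
    ((convex_convexHull ℝ _).mem_extremePoints_iff_convex_diff.mp hp).2
  have hsub : (X : Set (Fin d → ℝ)) \ {p} ⊆ convexHull ℝ (X : Set (Fin d → ℝ)) \ {p} := by
    intro z hz; exact ⟨subset_convexHull ℝ _ hz.1, hz.2⟩
  have := convexHull_min hsub hconv hmem
  exact this.2 rfl

/-- Key algebraic exchange lemma. -/
lemma lemA {B : Set (Fin d → ℝ)} {u y : Fin d → ℝ}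
    (hu : u ∈ convexHull ℝ (insert y B)) (hy : y ∈ convexHull ℝ (insert u B)) :
    u = y ∨ u ∈ convexHull ℝ B := by
  rcases B.eq_empty_or_nonempty with rfl | hB
  · left
    simpa [convexHull_singleton] using hu
  rw [convexHull_insert hB, mem_convexJoin] at hu hy
  obtain ⟨p1, hp1, z1, hz1, a, b, ha, hb, hab, hE1⟩ := hu
  obtain ⟨p2, hp2, z2, hz2, c, e, hc, he, hce, hE2⟩ := hy
  rw [Set.mem_singleton_iff] at hp1 hp2
  rw [hp1] at hE1
  rw [hp2] at hE2
  -- hE1 : a • y + b • z1 = u,  hE2 : c • u + e • z2 = y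
  by_cases hac : a * c = 1
  · left
    have ha1 : a = 1 := by nlinarith
    have hb0 : b = 0 := by linarith
    rw [ha1, hb0] at hE1
    simpa using hE1.symm
  · right
    have hac1 : a * c ≤ 1 := by nlinarith
    have hpos : 0 < 1 - a * c := lt_of_le_of_ne (by linarith) (fun h => hac (by linarith))
    have hcoord : ∀ i, (1 - a * c) * u i = (a * e) * z2 i + b * z1 i := by
      intro i
      have h1 := congrFun hE1 i
      have h2 := congrFun hE2 i
      simp only [Pi.add_apply, Pi.smul_apply, smul_eq_mul] at h1 h2
      nlinarith [h1, h2]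
    have hsum : (a * e) / (1 - a * c) + b / (1 - a * c) = 1 := by
      field_simp
      nlinarith
    have hrep : ((a * e) / (1 - a * c)) • z2 + (b / (1 - a * c)) • z1 = u := by
      funext i
      simp only [Pi.add_apply, Pi.smul_apply, smul_eq_mul]
      have := hcoord i
      field_simp
      nlinarith [hcoord i]
    have hmem := (convex_convexHull ℝ B) hz2 hz1
      (div_nonneg (by positivity) hpos.le) (div_nonneg hb hpos.le) hsum
    rw [hrep] at hmem
    exact hmem

lemma exchange_step {k : ℕ} {S : Set (Fin d → ℝ)} (hS : DiscreteIn S)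
    {X : Finset (Fin d → ℝ)} (hXS : ↑X ⊆ S)
    (hHoff : IsKHoffman S k X) (hNH : ¬ IsKHollow S k X) :
    ∃ Q : Finset (Fin d → ℝ), ↑Q ⊆ S ∧ IsKHoffman S k Q ∧ Q.card = X.card ∧
      (S ∩ convexHull ℝ (Q : Set (Fin d → ℝ))).ncard
        < (S ∩ convexHull ℝ (X : Set (Fin d → ℝ))).ncard := by
  classical
  have hNH' : AtLeast k ((convexHull ℝ (X : Set (Fin d → ℝ)) \
      (convexHull ℝ (X : Set (Fin d → ℝ))).extremePoints ℝ) ∩ S) := not_not.mp hNH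
  set Hs : Set (Fin d → ℝ) :=
    ⋂ p ∈ (X : Set (Fin d → ℝ)), convexHull ℝ ((X : Set (Fin d → ℝ)) \ {p}) with hHs
  have hHoff' : ¬ AtLeast k (Hs ∩ S) := hHoff
  have hfin : (S ∩ convexHull ℝ (X : Set (Fin d → ℝ))).Finite := finite_S_conv hS X
  set NEs : Set (Fin d → ℝ) := (convexHull ℝ (X : Set (Fin d → ℝ)) \
      (convexHull ℝ (X : Set (Fin d → ℝ))).extremePoints ℝ) ∩ S with hNEs
  have hNEfin : NEs.Finite := hfin.subset (by rintro w ⟨⟨h1, h2⟩, h3⟩; exact ⟨h3, h1⟩)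
  have hnotsub : ¬ (NEs ⊆ Hs ∩ S) := fun hsub => hHoff' (atLeast_mono hsub hNH')
  obtain ⟨y0, hy0NE, hy0H⟩ := Set.not_subset.mp hnotsub
  set candS : Set (Fin d → ℝ) := {w | w ∈ NEs ∧ w ∉ Hs} with hcandS
  have hcandfin : candS.Finite := hNEfin.subset (fun w hw => hw.1)
  have hy0cand : y0 ∈ candS := ⟨hy0NE, fun h => hy0H ⟨h, hy0NE.2⟩⟩
  set candF := hcandfin.toFinset with hcandF
  have hy0candF : y0 ∈ candF := hcandfin.mem_toFinset.mpr hy0cand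
  set Dc : (Fin d → ℝ) → ℕ := fun w =>
    (X.filter (fun x' => w ∉ convexHull ℝ ((X : Set (Fin d → ℝ)) \ {x'}))).card with hDc
  obtain ⟨y, hycandF, hymin⟩ := candF.exists_min_image Dc ⟨y0, hy0candF⟩
  have hycand : y ∈ candS := hcandfin.mem_toFinset.mp hycandF
  obtain ⟨⟨⟨hyK, hyext⟩, hyS⟩, hyH⟩ := hycand
  have hyA : y ∉ (X : Set (Fin d → ℝ)) := by
    intro hyA
    apply hyH
    rw [hHs, Set.mem_iInter₂]
    intro p hp
    by_cases hpy : p = y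
    · subst hpy; exact mem_hull_diff_of_not_ext hyA hyext
    · exact subset_convexHull ℝ _ ⟨hyA, fun h => hpy (Set.mem_singleton_iff.mp h).symm⟩
  have hex : ∃ x ∈ (X : Set (Fin d → ℝ)),
      y ∉ convexHull ℝ ((X : Set (Fin d → ℝ)) \ {x}) := by
    by_contra hcon
    push_neg at hcon
    exact hyH (by rw [hHs, Set.mem_iInter₂]; exact hcon)
  obtain ⟨x, hxA, hxD⟩ := hex
  have hxX : x ∈ X := hxA
  set Q : Finset (Fin d → ℝ) := insert y (X.erase x) with hQ
  have hyerase : y ∉ X.erase x := fun h => hyA (Finset.mem_coe.mpr (Finset.mem_of_mem_erase h))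
  have hQcard : Q.card = X.card := by
    rw [hQ, Finset.card_insert_of_notMem hyerase, Finset.card_erase_of_mem hxX]
    have : 0 < X.card := Finset.card_pos.mpr ⟨x, hxX⟩
    omega
  have hQcoe : (Q : Set (Fin d → ℝ)) = insert y ((X : Set (Fin d → ℝ)) \ {x}) := by
    rw [hQ]; push_cast; rfl
  have hQS : (Q : Set (Fin d → ℝ)) ⊆ S := by
    rw [hQcoe]
    rintro w (rfl | ⟨hwA, -⟩)
    · exact hyS
    · exact hXS hwA
  have hconvQ : convexHull ℝ (Q : Set (Fin d → ℝ)) ⊆ convexHull ℝ (X : Set (Fin d → ℝ)) := by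
    rw [hQcoe]
    refine convexHull_min ?_ (convex_convexHull ℝ _)
    rintro w (rfl | ⟨h1, -⟩)
    · exact hyK
    · exact subset_convexHull ℝ _ h1
  have hsubAx : x ∈ convexHull ℝ ((X : Set (Fin d → ℝ)) \ {x}) →
      (X : Set (Fin d → ℝ)) ⊆ convexHull ℝ ((X : Set (Fin d → ℝ)) \ {x}) := by
    intro hmem w hw
    by_cases hwx : w = x
    · subst hwx; exact hmem
    · exact subset_convexHull ℝ _ ⟨hw, fun hh => hwx (Set.mem_singleton_iff.mp hh)⟩
  have hxnotconvQ : x ∉ convexHull ℝ (Q : Set (Fin d → ℝ)) := by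
    rw [hQcoe]
    intro hx
    have hyK' : y ∈ convexHull ℝ (insert x ((X : Set (Fin d → ℝ)) \ {x})) := by
      rw [Set.insert_diff_singleton, Set.insert_eq_self.mpr hxA]
      exact hyK
    rcases lemA hx hyK' with heq | hmem
    · exact hyA (heq ▸ hxA)
    · exact hxD (convexHull_min (hsubAx hmem) (convex_convexHull ℝ _) hyK)
  have hxin : x ∈ S ∩ convexHull ℝ (X : Set (Fin d → ℝ)) :=
    ⟨hXS hxA, subset_convexHull ℝ _ hxA⟩
  have hncard : (S ∩ convexHull ℝ (Q : Set (Fin d → ℝ))).ncard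
      < (S ∩ convexHull ℝ (X : Set (Fin d → ℝ))).ncard := by
    refine Set.ncard_lt_ncard ⟨inter_subset_inter_right S hconvQ, ?_⟩ hfin
    intro hsup
    exact hxnotconvQ (hsup hxin).2
  -- key inclusion
  have hQdiff : ∀ p : Fin d → ℝ, p ≠ y →
      (Q : Set (Fin d → ℝ)) \ {p} = insert y (((X : Set (Fin d → ℝ)) \ {x}) \ {p}) := by
    intro p hp
    rw [hQcoe, Set.insert_diff_of_notMem _ (fun h => hp (Set.mem_singleton_iff.mp h).symm)]
  have hkey : (⋂ p ∈ (Q : Set (Fin d → ℝ)),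
      convexHull ℝ ((Q : Set (Fin d → ℝ)) \ {p})) ∩ S ⊆ Hs ∩ S := by
    rintro u ⟨huHQ, huS⟩
    rw [Set.mem_iInter₂] at huHQ
    refine ⟨?_, huS⟩
    have hQy : (Q : Set (Fin d → ℝ)) \ {y} = (X : Set (Fin d → ℝ)) \ {x} := by
      rw [hQcoe, Set.insert_diff_self_of_notMem (fun h => hyA h.1)]
    have hiu : u ∈ convexHull ℝ ((X : Set (Fin d → ℝ)) \ {x}) := by
      have h := huHQ y (by rw [hQcoe]; exact Set.mem_insert _ _)
      rwa [hQy] at h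
    rw [hHs, Set.mem_iInter₂]
    intro p hpA
    by_cases hpx : p = x
    · subst hpx; exact hiu
    have hpy : p ≠ y := fun h => hyA (h ▸ hpA)
    have hpQ : p ∈ (Q : Set (Fin d → ℝ)) := by
      rw [hQcoe]
      exact Set.mem_insert_of_mem _ ⟨hpA, fun h => hpx (Set.mem_singleton_iff.mp h)⟩
    have hup : u ∈ convexHull ℝ (insert y (((X : Set (Fin d → ℝ)) \ {x}) \ {p})) := by
      have h := huHQ p hpQ
      rwa [hQdiff p hpy] at h
    by_cases hyp : y ∈ convexHull ℝ ((X : Set (Fin d → ℝ)) \ {p})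
    · refine convexHull_min ?_ (convex_convexHull ℝ _) hup
      rintro w (rfl | ⟨⟨hw1, -⟩, hw3⟩)
      · exact hyp
      · exact subset_convexHull ℝ _ ⟨hw1, hw3⟩
    · by_contra hucon
      have huy : u ≠ y := fun h => hxD (h ▸ hiu)
      have hux : u ≠ x := by
        intro h
        subst h
        exact hxD (convexHull_min (hsubAx hiu) (convex_convexHull ℝ _) hyK)
      have huA : u ∉ (X : Set (Fin d → ℝ)) := by
        intro huA
        by_cases hupq : u = p
        · have hu' : u ∈ convexHull ℝ (insert y ((X : Set (Fin d → ℝ)) \ {u})) := by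
            refine convexHull_mono (Set.insert_subset_insert ?_) hup
            intro w hw
            exact ⟨hw.1.1, by rw [hupq]; exact hw.2⟩
          have hy' : y ∈ convexHull ℝ (insert u ((X : Set (Fin d → ℝ)) \ {u})) := by
            rw [Set.insert_diff_singleton, Set.insert_eq_self.mpr huA]
            exact hyK
          rcases lemA hu' hy' with heq | hmem
          · exact huy heq
          · exact hucon (by rw [← hupq]; exact hmem)
        · exact hucon (subset_convexHull ℝ _
            ⟨huA, fun h => hupq (Set.mem_singleton_iff.mp h)⟩)
      have hucandF : u ∈ candF := by
        rw [hcandfin.mem_toFinset]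
        refine ⟨⟨⟨convexHull_mono Set.diff_subset hiu, fun h => huA (ext_subset_self X h)⟩,
          huS⟩, ?_⟩
        intro hH
        rw [hHs, Set.mem_iInter₂] at hH
        exact hucon (hH p hpA)
      have hDsub : (X.filter (fun x' => u ∉ convexHull ℝ ((X : Set (Fin d → ℝ)) \ {x'})))
          ⊆ (X.filter (fun x' => y ∉ convexHull ℝ ((X : Set (Fin d → ℝ)) \ {x'}))).erase x := by
        intro r hr
        rw [Finset.mem_filter] at hr
        obtain ⟨hrX, hru⟩ := hr
        have hrx : r ≠ x := fun h => hru (h ▸ hiu)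
        rw [Finset.mem_erase]
        refine ⟨hrx, Finset.mem_filter.mpr ⟨hrX, ?_⟩⟩
        intro hyr
        apply hru
        have hry : r ≠ y := fun h => hyA (h ▸ (Finset.mem_coe.mpr hrX))
        have hrQ : r ∈ (Q : Set (Fin d → ℝ)) := by
          rw [hQcoe]
          exact Set.mem_insert_of_mem _
            ⟨Finset.mem_coe.mpr hrX, fun h => hrx (Set.mem_singleton_iff.mp h)⟩
        have h2 := huHQ r hrQ
        rw [hQdiff r hry] at h2
        refine convexHull_min ?_ (convex_convexHull ℝ _) h2
        rintro w (rfl | ⟨⟨hw1, -⟩, hw3⟩)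
        · exact hyr
        · exact subset_convexHull ℝ _ ⟨hw1, hw3⟩
      have hxmem : x ∈ X.filter (fun x' => y ∉ convexHull ℝ ((X : Set (Fin d → ℝ)) \ {x'})) :=
        Finset.mem_filter.mpr ⟨hxX, hxD⟩
      have hlt : Dc u < Dc y := by
        calc Dc u ≤ ((X.filter (fun x' => y ∉ convexHull ℝ ((X : Set (Fin d → ℝ)) \ {x'}))).erase x).card :=
              Finset.card_le_card hDsub
          _ < (X.filter (fun x' => y ∉ convexHull ℝ ((X : Set (Fin d → ℝ)) \ {x'}))).card :=
              Finset.card_erase_lt_of_mem hxmem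
      have := hymin u hucandF
      omega
  have hQHoff : IsKHoffman S k Q := fun hAL => hHoff' (atLeast_mono hkey hAL)
  exact ⟨Q, hQS, hQHoff, hQcard, hncard⟩


/-- Descent: every Hoffman set yields a hollow set of the same cardinality. -/
lemma hoffman_to_hollow {k : ℕ} {S : Set (Fin d → ℝ)} (hS : DiscreteIn S)
    {X : Finset (Fin d → ℝ)} (hXS : ↑X ⊆ S) (hHoff : IsKHoffman S k X) :
    ∃ Q : Finset (Fin d → ℝ), ↑Q ⊆ S ∧ IsKHollow S k Q ∧ Q.card = X.card := by
  obtain ⟨n, hn⟩ : ∃ n, (S ∩ convexHull ℝ (X : Set (Fin d → ℝ))).ncard = n := ⟨_, rfl⟩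
  induction n using Nat.strong_induction_on generalizing X with
  | _ n ih =>
    by_cases hHol : IsKHollow S k X
    · exact ⟨X, hXS, hHol, rfl⟩
    · obtain ⟨Q, hQS, hQHoff, hQcard, hQlt⟩ := exchange_step hS hXS hHoff hHol
      rw [hn] at hQlt
      obtain ⟨R, hRS, hRHol, hRcard⟩ := ih _ hQlt hQS hQHoff rfl
      exact ⟨R, hRS, hRHol, hRcard.trans hQcard⟩

/-- A nonempty hollow set is Hoffman. -/
lemma hollow_to_hoffman {k : ℕ} {S : Set (Fin d → ℝ)}
    {P : Finset (Fin d → ℝ)} (hne : P.Nonempty) (hHol : IsKHollow S k P) :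
    IsKHoffman S k P := by
  intro hAL
  apply hHol
  refine atLeast_mono ?_ hAL
  rintro u ⟨huH, huS⟩
  rw [Set.mem_iInter₂] at huH
  obtain ⟨p0, hp0⟩ := hne
  refine ⟨⟨?_, ?_⟩, huS⟩
  · exact convexHull_mono Set.diff_subset (huH p0 (Finset.mem_coe.mpr hp0))
  · intro hext
    have huP : u ∈ (P : Set (Fin d → ℝ)) := ext_subset_self P hext
    exact ext_not_mem_hull_diff hext (huH u huP)

/-- Singletons of `S` are hollow when `k ≠ 0`. -/
lemma singleton_hollow {k : ℕ} {S : Set (Fin d → ℝ)} (hk : k ≠ 0) (s : Fin d → ℝ) :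
    IsKHollow S k ({s} : Finset (Fin d → ℝ)) := by
  intro hAL
  obtain ⟨T, hT, hcard⟩ := hAL
  have hsub : (convexHull ℝ (({s} : Finset (Fin d → ℝ)) : Set (Fin d → ℝ)) \
      (convexHull ℝ (({s} : Finset (Fin d → ℝ)) : Set (Fin d → ℝ))).extremePoints ℝ) ∩ S
        = ∅ := by
    push_cast
    rw [convexHull_singleton, extremePoints_singleton]
    simp
  rw [hsub, Set.subset_empty_iff, Finset.coe_eq_empty] at hT
  rw [hT] at hcard
  simp at hcard
  omega

/-- The empty set is hollow when `k ≠ 0`. -/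
lemma empty_hollow {k : ℕ} {S : Set (Fin d → ℝ)} (hk : k ≠ 0) :
    IsKHollow S k (∅ : Finset (Fin d → ℝ)) := by
  intro hAL
  obtain ⟨T, hT, hcard⟩ := hAL
  have hsub : (convexHull ℝ ((∅ : Finset (Fin d → ℝ)) : Set (Fin d → ℝ)) \
      (convexHull ℝ ((∅ : Finset (Fin d → ℝ)) : Set (Fin d → ℝ))).extremePoints ℝ) ∩ S = ∅ := by
    push_cast
    rw [convexHull_empty]
    simp
  rw [hsub, Set.subset_empty_iff, Finset.coe_eq_empty] at hT
  rw [hT] at hcard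
  simp at hcard
  omega

/-- the quantitative Hoffman number (largest cardinality of a `k`-Hoffman subset
of `S`) equals the largest cardinality of a `k`-hollow subset of `S`. -/
theorem hoffman_eq_hollow (d k : ℕ) (S : Set (Fin d → ℝ)) (hS : DiscreteIn S) (N : ℕ) :
    IsGreatest {n | ∃ P : Finset (Fin d → ℝ), ↑P ⊆ S ∧ IsKHoffman S k P ∧ P.card = n} N ↔
    IsGreatest {n | ∃ P : Finset (Fin d → ℝ), ↑P ⊆ S ∧ IsKHollow S k P ∧ P.card = n} N := by
  constructor
  · rintro ⟨⟨P, hPS, hPHoff, hPcard⟩, hub⟩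
    constructor
    · obtain ⟨Q, hQS, hQHol, hQcard⟩ := hoffman_to_hollow hS hPS hPHoff
      exact ⟨Q, hQS, hQHol, hQcard.trans hPcard⟩
    · rintro b ⟨R, hRS, hRHol, hRcard⟩
      rcases Nat.eq_zero_or_pos b with rfl | hbpos
      · exact Nat.zero_le N
      · have hRne : R.Nonempty := Finset.card_pos.mp (hRcard ▸ hbpos)
        exact hub ⟨R, hRS, hollow_to_hoffman hRne hRHol, hRcard⟩
  · rintro ⟨⟨P, hPS, hPHol, hPcard⟩, hub⟩
    have hk : k ≠ 0 := by
      rintro rfl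
      exact hPHol ⟨∅, by simp⟩
    constructor
    · rcases Nat.eq_zero_or_pos N with rfl | hNpos
      · -- N = 0 : show ∅ is Hoffman
        refine ⟨∅, by simp, ?_, by simp⟩
        intro hAL
        obtain ⟨T, hT, hcard⟩ := hAL
        have hTS : (T : Set (Fin d → ℝ)) ⊆ S := by
          intro w hw
          have := hT hw
          simp only [Finset.coe_empty, Set.mem_inter_iff] at this
          · exact this.2
        obtain ⟨s, hs⟩ : T.Nonempty := Finset.card_pos.mp (by omega)
        have h1 : (1 : ℕ) ∈ {n | ∃ P : Finset (Fin d → ℝ),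
            ↑P ⊆ S ∧ IsKHollow S k P ∧ P.card = n} := by
          refine ⟨{s}, ?_, singleton_hollow hk s, Finset.card_singleton s⟩
          simp only [Finset.coe_singleton, Set.singleton_subset_iff]
          exact hTS hs
        have := hub h1
        omega
      · have hPne : P.Nonempty := by
          rcases P.eq_empty_or_nonempty with rfl | h
          · exfalso
            rw [Finset.card_empty] at hPcard
            omega
          · exact h
        exact ⟨P, hPS, hollow_to_hoffman hPne hPHol, hPcard⟩
    · rintro a ⟨R, hRS, hRHoff, hRcard⟩
      obtain ⟨Q, hQS, hQHol, hQcard⟩ := hoffman_to_hollow hS hRS hRHoff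
      exact hub ⟨Q, hQS, hQHol, hQcard.trans hRcard⟩
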